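/- Let w = φ^ω(1) be the fixed point of the bidimensional binary square morphism of size 2 with φ(0) = [[1,*],[0,1]] and φ(1) = [[0,1],[1,1]] (precisely: φ(0)_{0,0}=0, φ(0)_{1,0}=1, φ(0)_{0,1}=1; φ(1)_{0,0}=1, φ(1)_{1,0}=1, φ(1)_{0,1}=0, φ(1)_{1,1}=1; Case 3.2 of the paper). Then the sequence ℓ ↦ w(2ℓ, ℓ) equals 1 at ℓ = 0 and equals 0 for all ℓ ≥ 1; in particular w is not recurrent along the direction (2,1). -/
import Mathlib


theorem stmt_19 (φ : Fin 2 → Fin 2 → Fin 2 → Fin 2)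
    (h000 : φ 0 0 0 = 0) (h010 : φ 0 1 0 = 1) (h001 : φ 0 0 1 = 1)
    (h100 : φ 1 0 0 = 1) (h110 : φ 1 1 0 = 1) (h101 : φ 1 0 1 = 0) (h111 : φ 1 1 1 = 1)
    (w : ℕ → ℕ → Fin 2) (hw0 : w 0 0 = 1)
    (hfix : ∀ (x y : ℕ) (i j : Fin 2),
      w (2 * x + (i : ℕ)) (2 * y + (j : ℕ)) = φ (w x y) i j) :
    w 0 0 = 1 ∧ ∀ ℓ : ℕ, 1 ≤ ℓ → w (2 * ℓ) ℓ = 0 := by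
  have key : ∀ x : Fin 2, φ x 1 0 = 1 := by
    intro x; fin_cases x <;> assumption
  have lemA : ∀ m, w (2 * m + 1) m = 1 := by
    intro m
    induction m using Nat.strong_induction_on with
    | _ m ih =>
      rcases Nat.even_or_odd m with ⟨k, hk⟩ | ⟨k, hk⟩
      · have hk2 : m = 2 * k := by omega
        subst hk2
        have h := hfix (2 * k) k 1 0
        simpa using h.trans (key _)
      · subst hk
        have h := hfix (2 * k + 1) k 1 1
        have ihk : w (2 * k + 1) k = 1 := ih k (by omega)
        rw [ihk] at h
        simpa using h.trans h111
  refine ⟨hw0, ?_⟩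
  intro ℓ hℓ
  induction ℓ using Nat.strong_induction_on with
  | _ ℓ ih =>
    rcases Nat.even_or_odd ℓ with ⟨k, hk⟩ | ⟨k, hk⟩
    · have hk2 : ℓ = 2 * k := by omega
      subst hk2
      have h := hfix (2 * k) k 0 0
      have ihk : w (2 * k) k = 0 := ih k (by omega) (by omega)
      rw [ihk] at h
      simpa using h.trans h000
    · subst hk
      have h := hfix (2 * k + 1) k 0 1
      rw [lemA k] at h
      simpa using h.trans h101
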